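/- Let p ∈ [0,1]^n be a vector of source probabilities p_i = Pr(x_i = 1) for independent binary sources x_1,...,x_n, and let q ∈ [0,1]^n with test channels Q_i achieving the component rate-distortion functions R_i(D_i) with parameter s < 0. If the initial test-channel input distribution on the product space factorizes as q^(0)_K = Π_{i=1}^n q^(0)_{k_i}, then after each Blahut-Arimoto iteration t the distribution still factorizes: q^(t)_K = Π_i q^(t)_{k_i} and Q^(t)_{K|J} = Π_i Q^(t)_{k_i|j_i}. Consequently the rate and distortion of the product source satisfy R_s = Σ_{i=1}^n R_{i,s} and D_s = Σ_{i=1}^n D_{i,s}. -/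

import Mathlib

/-- One Blahut–Arimoto update of the test-channel transition probabilities:
`Q_{k|j} = q_k exp(s δ(j,k)) / Σ_{k'} q_{k'} exp(s δ(j,k'))`. -/
noncomputable def BAQ {J K : Type} [Fintype K] (s : ℝ) (δ : J → K → ℝ)
    (q : K → ℝ) : J → K → ℝ :=
  fun j k => q k * Real.exp (s * δ j k) / ∑ k', q k' * Real.exp (s * δ j k')

/-- One Blahut–Arimoto update of the test-channel input distribution:
`q'_k = Σ_j p_j Q_{k|j}`. -/
noncomputable def BAq {J K : Type} [Fintype J] [Fintype K] (p : J → ℝ) (s : ℝ)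
    (δ : J → K → ℝ) (q : K → ℝ) : K → ℝ :=
  fun k => ∑ j, p j * BAQ s δ q j k

/-- The Blahut–Arimoto iterates `q^{(t)}` starting from `q^{(0)} = q0`. -/
noncomputable def BAiter {J K : Type} [Fintype J] [Fintype K] (p : J → ℝ) (s : ℝ)
    (δ : J → K → ℝ) (q0 : K → ℝ) : ℕ → K → ℝ
  | 0 => q0
  | t + 1 => BAq p s δ (BAiter p s δ q0 t)

section Aux

variable {J K : Type} [Fintype J] [Fintype K]

lemma den_pos (s : ℝ) (δ : J → K → ℝ) (q : K → ℝ) (hq : ∀ k, 0 < q k) (k0 : K) (j : J) :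
    0 < ∑ k', q k' * Real.exp (s * δ j k') :=
  Finset.sum_pos (fun k _ => mul_pos (hq k) (Real.exp_pos _)) ⟨k0, Finset.mem_univ k0⟩

lemma BAQ_pos (s : ℝ) (δ : J → K → ℝ) (q : K → ℝ) (hq : ∀ k, 0 < q k) (k0 : K)
    (j : J) (k : K) : 0 < BAQ s δ q j k :=
  div_pos (mul_pos (hq k) (Real.exp_pos _)) (den_pos s δ q hq k0 j)

lemma BAQ_sum (s : ℝ) (δ : J → K → ℝ) (q : K → ℝ) (hq : ∀ k, 0 < q k) (k0 : K)
    (j : J) : ∑ k, BAQ s δ q j k = 1 := by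
  unfold BAQ
  rw [← Finset.sum_div, div_self (ne_of_gt (den_pos s δ q hq k0 j))]

lemma BAiter_pos (p : J → ℝ) (s : ℝ) (δ : J → K → ℝ) (q0 : K → ℝ)
    (hp : ∀ j, 0 < p j) (hq0 : ∀ k, 0 < q0 k) (j0 : J) (k0 : K) :
    ∀ t k, 0 < BAiter p s δ q0 t k := by
  intro t
  induction t with
  | zero => exact hq0
  | succ t ih =>
    intro k
    show 0 < BAq p s δ (BAiter p s δ q0 t) k
    exact Finset.sum_pos (fun j _ => mul_pos (hp j) (BAQ_pos s δ _ ih k0 j k))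
      ⟨j0, Finset.mem_univ j0⟩

lemma sum_sum_prod {n : ℕ} (h : Fin n → J → K → ℝ) :
    ∑ Jv : Fin n → J, ∑ Kv : Fin n → K, ∏ m, h m (Jv m) (Kv m)
      = ∏ m, ∑ j, ∑ k, h m j k := by
  have h1 : ∀ Jv : Fin n → J, ∑ Kv : Fin n → K, ∏ m, h m (Jv m) (Kv m)
      = ∏ m, ∑ k, h m (Jv m) k := fun Jv => (Fintype.prod_sum _).symm
  simp only [h1]
  exact (Fintype.prod_sum fun m j => ∑ k, h m j k).symm

lemma sum_prod_marked {n : ℕ} (f : Fin n → J → K → ℝ)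
    (hf : ∀ m, ∑ j, ∑ k, f m j k = 1) (i : Fin n) (g : J → K → ℝ) :
    ∑ Jv : Fin n → J, ∑ Kv : Fin n → K,
        (∏ m, f m (Jv m) (Kv m)) * g (Jv i) (Kv i)
      = ∑ j, ∑ k, f i j k * g j k := by
  classical
  set F : Fin n → J → K → ℝ := fun m j k => if m = i then f m j k * g j k else f m j k with hF
  have key : ∀ (Jv : Fin n → J) (Kv : Fin n → K),
      (∏ m, f m (Jv m) (Kv m)) * g (Jv i) (Kv i) = ∏ m, F m (Jv m) (Kv m) := by
    intro Jv Kv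
    rw [← Finset.mul_prod_erase Finset.univ (fun m => F m (Jv m) (Kv m)) (Finset.mem_univ i),
      ← Finset.mul_prod_erase Finset.univ (fun m => f m (Jv m) (Kv m)) (Finset.mem_univ i)]
    have he : ∏ m ∈ Finset.univ.erase i, F m (Jv m) (Kv m)
        = ∏ m ∈ Finset.univ.erase i, f m (Jv m) (Kv m) := by
      refine Finset.prod_congr rfl fun m hm => ?_
      simp [hF, Finset.ne_of_mem_erase hm]
    rw [he]
    simp [hF]
    ring
  simp only [key]
  rw [sum_sum_prod F,
    ← Finset.mul_prod_erase Finset.univ (fun m => ∑ j, ∑ k, F m j k) (Finset.mem_univ i)]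
  have he : ∏ m ∈ Finset.univ.erase i, ∑ j, ∑ k, F m j k = 1 := by
    refine Finset.prod_eq_one fun m hm => ?_
    have : ∀ j k, F m j k = f m j k := by
      intro j k; simp [hF, Finset.ne_of_mem_erase hm]
    simp only [this]; exact hf m
  rw [he, mul_one]
  simp [hF]

lemma BAQ_prod {n : ℕ} (s : ℝ) (δ : Fin n → J → K → ℝ) (q : Fin n → K → ℝ) :
    BAQ s (fun (Jv : Fin n → J) (Kv : Fin n → K) => ∑ i, δ i (Jv i) (Kv i))
        (fun Kv : Fin n → K => ∏ i, q i (Kv i))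
      = fun (Jv : Fin n → J) (Kv : Fin n → K) => ∏ i, BAQ s (δ i) (q i) (Jv i) (Kv i) := by
  funext Jv Kv
  have hnum : ∀ Kv' : Fin n → K,
      (∏ i, q i (Kv' i)) * Real.exp (s * ∑ i, δ i (Jv i) (Kv' i))
        = ∏ i, q i (Kv' i) * Real.exp (s * δ i (Jv i) (Kv' i)) := by
    intro Kv'
    rw [Finset.mul_sum, Real.exp_sum, ← Finset.prod_mul_distrib]
  show (∏ i, q i (Kv i)) * Real.exp (s * ∑ i, δ i (Jv i) (Kv i)) /
      (∑ Kv' : Fin n → K, (∏ i, q i (Kv' i)) * Real.exp (s * ∑ i, δ i (Jv i) (Kv' i))) = _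
  rw [hnum Kv]
  have hden : (∑ Kv' : Fin n → K, (∏ i, q i (Kv' i)) * Real.exp (s * ∑ i, δ i (Jv i) (Kv' i)))
      = ∏ i, ∑ k, q i k * Real.exp (s * δ i (Jv i) k) := by
    simp only [hnum]
    exact (Fintype.prod_sum fun i k => q i k * Real.exp (s * δ i (Jv i) k)).symm
  rw [hden]
  exact (Finset.prod_div_distrib _ _).symm

lemma BAq_prod {n : ℕ} (p : Fin n → J → ℝ) (s : ℝ) (δ : Fin n → J → K → ℝ)
    (q : Fin n → K → ℝ) :
    BAq (fun Jv : Fin n → J => ∏ i, p i (Jv i)) s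
        (fun (Jv : Fin n → J) (Kv : Fin n → K) => ∑ i, δ i (Jv i) (Kv i))
        (fun Kv : Fin n → K => ∏ i, q i (Kv i))
      = fun Kv : Fin n → K => ∏ i, BAq (p i) s (δ i) (q i) (Kv i) := by
  funext Kv
  show ∑ Jv : Fin n → J, (∏ i, p i (Jv i)) *
      BAQ s (fun Jv Kv => ∑ i, δ i (Jv i) (Kv i)) (fun Kv => ∏ i, q i (Kv i)) Jv Kv = _
  simp only [BAQ_prod s δ q]
  have : ∀ Jv : Fin n → J, (∏ i, p i (Jv i)) * ∏ i, BAQ s (δ i) (q i) (Jv i) (Kv i)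
      = ∏ i, p i (Jv i) * BAQ s (δ i) (q i) (Jv i) (Kv i) :=
    fun Jv => (Finset.prod_mul_distrib).symm
  simp only [this]
  exact (Fintype.prod_sum fun i j => p i j * BAQ s (δ i) (q i) j (Kv i)).symm

lemma sum_swap3 {A B C : Type} [Fintype A] [Fintype B] [Fintype C] (T : A → B → C → ℝ) :
    ∑ a, ∑ b, ∑ c, T a b c = ∑ c, ∑ a, ∑ b, T a b c := by
  have h1 : ∀ a : A, ∑ b, ∑ c, T a b c = ∑ c, ∑ b, T a b c := fun a => Finset.sum_comm
  simp only [h1]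
  exact Finset.sum_comm

end Aux

open Finset in
/-- Factored Blahut–Arimoto: for `n` independent sources `p i` with
per-component distortions `δ i`, parameter `s < 0`, and a factorized initial
test-channel input distribution `q0J = Π_i q0 i`, every Blahut–Arimoto iterate of the
product source factorizes (`q^{(t)}_K = Π_i q^{(t)}_{k_i}` and
`Q^{(t)}_{K|J} = Π_i Q^{(t)}_{k_i|j_i}`), and consequently the rate and the distortion
of the product source are the sums of the component rates and distortions. -/
theorem stmt_4 (n : ℕ) (J K : Type) [Fintype J] [Fintype K]
    (p : Fin n → J → ℝ) (δ : Fin n → J → K → ℝ) (s : ℝ) (hs : s < 0)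
    (q0 : Fin n → K → ℝ)
    (hp : ∀ i j, 0 < p i j) (hps : ∀ i, ∑ j, p i j = 1)
    (hq0 : ∀ i k, 0 < q0 i k) (hq0s : ∀ i, ∑ k, q0 i k = 1) :
    ∀ t : ℕ,
      (BAiter (fun Jv : Fin n → J => ∏ i, p i (Jv i)) s
          (fun (Jv : Fin n → J) (Kv : Fin n → K) => ∑ i, δ i (Jv i) (Kv i))
          (fun Kv : Fin n → K => ∏ i, q0 i (Kv i)) t
        = fun Kv => ∏ i, BAiter (p i) s (δ i) (q0 i) t (Kv i)) ∧
      (BAQ s (fun (Jv : Fin n → J) (Kv : Fin n → K) => ∑ i, δ i (Jv i) (Kv i))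
          (BAiter (fun Jv : Fin n → J => ∏ i, p i (Jv i)) s
            (fun (Jv : Fin n → J) (Kv : Fin n → K) => ∑ i, δ i (Jv i) (Kv i))
            (fun Kv : Fin n → K => ∏ i, q0 i (Kv i)) t)
        = fun Jv Kv => ∏ i, BAQ s (δ i) (BAiter (p i) s (δ i) (q0 i) t) (Jv i) (Kv i)) ∧
      (∑ Jv : Fin n → J, ∑ Kv : Fin n → K,
          (∏ i, p i (Jv i)) *
            (∏ i, BAQ s (δ i) (BAiter (p i) s (δ i) (q0 i) t) (Jv i) (Kv i)) *
            Real.log ((∏ i, BAQ s (δ i) (BAiter (p i) s (δ i) (q0 i) t) (Jv i) (Kv i)) /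
              ∑ Jv' : Fin n → J, (∏ i, p i (Jv' i)) *
                ∏ i, BAQ s (δ i) (BAiter (p i) s (δ i) (q0 i) t) (Jv' i) (Kv i))
        = ∑ i, ∑ j, ∑ k,
            p i j * BAQ s (δ i) (BAiter (p i) s (δ i) (q0 i) t) j k *
              Real.log (BAQ s (δ i) (BAiter (p i) s (δ i) (q0 i) t) j k /
                ∑ j', p i j' * BAQ s (δ i) (BAiter (p i) s (δ i) (q0 i) t) j' k)) ∧
      (∑ Jv : Fin n → J, ∑ Kv : Fin n → K,
          (∏ i, p i (Jv i)) *
            (∏ i, BAQ s (δ i) (BAiter (p i) s (δ i) (q0 i) t) (Jv i) (Kv i)) *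
            (∑ i, δ i (Jv i) (Kv i))
        = ∑ i, ∑ j, ∑ k,
            p i j * BAQ s (δ i) (BAiter (p i) s (δ i) (q0 i) t) j k * δ i j k) := by
  classical
  -- nonemptiness of the component alphabets (whenever an index `i` exists)
  classical
  -- nonemptiness of the component alphabets (whenever an index `i` exists)
  have hJne : Fin n → Nonempty J := by
    intro i
    by_contra h
    rw [not_nonempty_iff] at h
    have := hps i
    simp at this
  have hKne : Fin n → Nonempty K := by
    intro i
    by_contra h
    rw [not_nonempty_iff] at h
    have := hq0s i
    simp at this
  have hiter : ∀ (i : Fin n) (t : ℕ) (k : K), 0 < BAiter (p i) s (δ i) (q0 i) t k :=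
    fun i => BAiter_pos (p i) s (δ i) (q0 i) (hp i) (hq0 i) (hJne i).some (hKne i).some
  -- factorization of the iterates
  have hfact : ∀ t, BAiter (fun Jv : Fin n → J => ∏ i, p i (Jv i)) s
      (fun (Jv : Fin n → J) (Kv : Fin n → K) => ∑ i, δ i (Jv i) (Kv i))
      (fun Kv : Fin n → K => ∏ i, q0 i (Kv i)) t
      = fun Kv => ∏ i, BAiter (p i) s (δ i) (q0 i) t (Kv i) := by
    intro t
    induction t with
    | zero => rfl
    | succ t ih =>
      show BAq _ s _ _ = _
      rw [ih, BAq_prod]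
      rfl
  intro t
  have hQfact : BAQ s (fun (Jv : Fin n → J) (Kv : Fin n → K) => ∑ i, δ i (Jv i) (Kv i))
      (BAiter (fun Jv : Fin n → J => ∏ i, p i (Jv i)) s
        (fun (Jv : Fin n → J) (Kv : Fin n → K) => ∑ i, δ i (Jv i) (Kv i))
        (fun Kv : Fin n → K => ∏ i, q0 i (Kv i)) t)
      = fun Jv Kv => ∏ i, BAQ s (δ i) (BAiter (p i) s (δ i) (q0 i) t) (Jv i) (Kv i) := by
    rw [hfact t]
    exact BAQ_prod s δ (fun i => BAiter (p i) s (δ i) (q0 i) t)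
  have hQpos : ∀ (i : Fin n) (j : J) (k : K),
      0 < BAQ s (δ i) (BAiter (p i) s (δ i) (q0 i) t) j k :=
    fun i => BAQ_pos s (δ i) _ (hiter i t) (hKne i).some
  have hmpos : ∀ (i : Fin n) (k : K),
      0 < ∑ j', p i j' * BAQ s (δ i) (BAiter (p i) s (δ i) (q0 i) t) j' k :=
    fun i k => Finset.sum_pos (fun j _ => mul_pos (hp i j) (hQpos i j k))
      ⟨(hJne i).some, Finset.mem_univ _⟩
  have hf1 : ∀ i : Fin n,
      ∑ j, ∑ k, p i j * BAQ s (δ i) (BAiter (p i) s (δ i) (q0 i) t) j k = 1 := by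
    intro i
    have h1 : ∀ j : J, ∑ k, p i j * BAQ s (δ i) (BAiter (p i) s (δ i) (q0 i) t) j k
        = p i j := by
      intro j
      rw [← Finset.mul_sum, BAQ_sum s (δ i) _ (hiter i t) (hKne i).some j, mul_one]
    simp only [h1]
    exact hps i
  refine ⟨hfact t, hQfact, ?_, ?_⟩
  · -- rate
    have hM : ∀ Kv : Fin n → K,
        (∑ Jv' : Fin n → J, (∏ i, p i (Jv' i)) *
          ∏ i, BAQ s (δ i) (BAiter (p i) s (δ i) (q0 i) t) (Jv' i) (Kv i))
        = ∏ i, ∑ j', p i j' * BAQ s (δ i) (BAiter (p i) s (δ i) (q0 i) t) j' (Kv i) := by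
      intro Kv
      simp only [← Finset.prod_mul_distrib]
      exact (Fintype.prod_sum fun i j =>
        p i j * BAQ s (δ i) (BAiter (p i) s (δ i) (q0 i) t) j (Kv i)).symm
    have hpt : ∀ (Jv : Fin n → J) (Kv : Fin n → K),
        (∏ i, p i (Jv i)) *
            (∏ i, BAQ s (δ i) (BAiter (p i) s (δ i) (q0 i) t) (Jv i) (Kv i)) *
            Real.log ((∏ i, BAQ s (δ i) (BAiter (p i) s (δ i) (q0 i) t) (Jv i) (Kv i)) /
              ∑ Jv' : Fin n → J, (∏ i, p i (Jv' i)) *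
                ∏ i, BAQ s (δ i) (BAiter (p i) s (δ i) (q0 i) t) (Jv' i) (Kv i))
        = ∑ i, (∏ m, p m (Jv m) * BAQ s (δ m) (BAiter (p m) s (δ m) (q0 m) t) (Jv m) (Kv m)) *
            Real.log (BAQ s (δ i) (BAiter (p i) s (δ i) (q0 i) t) (Jv i) (Kv i) /
              ∑ j', p i j' * BAQ s (δ i) (BAiter (p i) s (δ i) (q0 i) t) j' (Kv i)) := by
      intro Jv Kv
      rw [hM Kv, ← Finset.prod_div_distrib,
        Real.log_prod (fun i _ => ne_of_gt (div_pos (hQpos i (Jv i) (Kv i))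
          (hmpos i (Kv i)))),
        ← Finset.prod_mul_distrib, Finset.mul_sum]
    simp only [hpt]
    rw [sum_swap3]
    refine Finset.sum_congr rfl fun i _ => ?_
    exact sum_prod_marked
      (fun m j k => p m j * BAQ s (δ m) (BAiter (p m) s (δ m) (q0 m) t) j k) hf1 i
      (fun j k => Real.log (BAQ s (δ i) (BAiter (p i) s (δ i) (q0 i) t) j k /
        ∑ j', p i j' * BAQ s (δ i) (BAiter (p i) s (δ i) (q0 i) t) j' k))
  · -- distortion
    have hpt : ∀ (Jv : Fin n → J) (Kv : Fin n → K),
        (∏ i, p i (Jv i)) *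
            (∏ i, BAQ s (δ i) (BAiter (p i) s (δ i) (q0 i) t) (Jv i) (Kv i)) *
            (∑ i, δ i (Jv i) (Kv i))
        = ∑ i, (∏ m, p m (Jv m) * BAQ s (δ m) (BAiter (p m) s (δ m) (q0 m) t) (Jv m) (Kv m)) *
            δ i (Jv i) (Kv i) := by
      intro Jv Kv
      rw [← Finset.prod_mul_distrib, Finset.mul_sum]
    simp only [hpt]
    rw [sum_swap3]
    refine Finset.sum_congr rfl fun i _ => ?_
    exact sum_prod_marked
      (fun m j k => p m j * BAQ s (δ m) (BAiter (p m) s (δ m) (q0 m) t) j k) hf1 i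
      (fun j k => δ i j k)
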